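/- Let h(x) = x log x − x + 1 and h'(r) = log r. If the inequality h(x) ≥ h(r) + r h'(r)(log x − log r) holds for some pair (x₀, r₀) with 0 < x₀ ≤ r₀ ≤ 1 and r₀ ≥ 1/e, then it holds for all (x, r) ∈ [x₀, 1] × [r₀, 1]. -/

import Mathlib

open Real

noncomputable section

/-- The function `h(x) = x log x - x + 1` (with `h(0) = 1` since `Real.log 0 = 0`). -/
def hfun (x : ℝ) : ℝ := x * Real.log x - x + 1

namespace Stmt15Aux

open Set

/-- `F x r = h(x) - h(r) - r log r (log x - log r)`. -/
def F (x r : ℝ) : ℝ := hfun x - (hfun r + r * Real.log r * (Real.log x - Real.log r))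

lemma hasDerivAt_hfun {x : ℝ} (hx : x ≠ 0) : HasDerivAt hfun (Real.log x) x := by
  have h := (Real.hasDerivAt_mul_log hx).sub (hasDerivAt_id x)
  have h2 := h.add_const (1 : ℝ)
  have h3 : HasDerivAt hfun (Real.log x + 1 - 1) x := h2
  simpa using h3

/-- minimum of `t log t` is `-1/e`. -/
lemma neg_exp_le_mul_log {t : ℝ} (ht : 0 < t) : -(Real.exp 1)⁻¹ ≤ t * Real.log t := by
  have h1 : Real.log ((Real.exp 1 * t)⁻¹) ≤ (Real.exp 1 * t)⁻¹ - 1 :=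
    Real.log_le_sub_one_of_pos (by positivity)
  rw [Real.log_inv, Real.log_mul (Real.exp_pos 1).ne' ht.ne', Real.log_exp] at h1
  have h2 : -Real.log t ≤ (Real.exp 1 * t)⁻¹ := by linarith
  have h3 : -(t * Real.log t) ≤ t * (Real.exp 1 * t)⁻¹ := by
    calc -(t * Real.log t) = t * (-Real.log t) := by ring
    _ ≤ t * (Real.exp 1 * t)⁻¹ := by exact mul_le_mul_of_nonneg_left h2 ht.le
  have h4 : t * (Real.exp 1 * t)⁻¹ = (Real.exp 1)⁻¹ := by
    field_simp
  rw [h4] at h3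
  linarith

lemma phi_monotoneOn : MonotoneOn (fun t : ℝ => t * Real.log t)
    (Icc ((Real.exp 1)⁻¹) 1) := by
  have he : (0:ℝ) < (Real.exp 1)⁻¹ := by positivity
  apply monotoneOn_of_deriv_nonneg (convex_Icc _ _)
  · apply ContinuousOn.mul continuousOn_id
    exact Real.continuousOn_log.mono (fun t ht => by
      simp only [mem_compl_iff, mem_singleton_iff]
      exact ne_of_gt (lt_of_lt_of_le he ht.1))
  · intro t ht
    rw [interior_Icc] at ht
    exact ((Real.hasDerivAt_mul_log (ne_of_gt (lt_trans he ht.1))).differentiableAt).differentiableWithinAt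
  · intro t ht
    rw [interior_Icc] at ht
    rw [(Real.hasDerivAt_mul_log (ne_of_gt (lt_trans he ht.1))).deriv]
    have : (-1 : ℝ) ≤ Real.log t := by
      have := Real.log_le_log he ht.1.le
      rwa [Real.log_inv, Real.log_exp] at this
    linarith

/-- For `t` between `-(r log r)` and `r` (with `1/e ≤ r ≤ 1`), `t log t ≤ r log r`. -/
lemma phi_le {r t : ℝ} (hre : (Real.exp 1)⁻¹ ≤ r) (hr1 : r ≤ 1)
    (h1 : -(r * Real.log r) ≤ t) (h2 : t ≤ r) : t * Real.log t ≤ r * Real.log r := by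
  set c := -(r * Real.log r) with hc
  have hr0 : (0:ℝ) < r := lt_of_lt_of_le (by positivity) hre
  have hc0 : 0 ≤ c := by
    have : Real.log r ≤ 0 := Real.log_nonpos hr0.le hr1
    have := mul_nonpos_of_nonneg_of_nonpos hr0.le this
    simpa [hc] using this
  have hce : c ≤ (Real.exp 1)⁻¹ := by
    have := neg_exp_le_mul_log hr0
    simp only [hc]; linarith
  -- φ(c) ≤ φ(r) = -c
  have hphic : c * Real.log c ≤ r * Real.log r := by
    rcases eq_or_lt_of_le hc0 with h | h
    · have hrr : r * Real.log r = 0 := by simp only [hc] at h; linarith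
      rw [← h, hrr]
      simp
    · have hlogc : Real.log c ≤ -1 := by
        have := Real.log_le_log h hce
        rwa [Real.log_inv, Real.log_exp] at this
      have : c * Real.log c ≤ c * (-1) := mul_le_mul_of_nonneg_left hlogc h.le
      simp only [hc] at this ⊢; linarith
  -- use convexity of φ on [0,∞)
  have hconv := Real.convexOn_mul_log
  have ht : t ∈ segment ℝ c r := by
    rw [segment_eq_Icc (le_trans h1 h2 : c ≤ r)]
    exact ⟨h1, h2⟩
  have := hconv.le_on_segment (mem_Ici.mpr hc0) (mem_Ici.mpr hr0.le) ht
  simp only [max_eq_right hphic] at this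
  exact this

lemma hasDerivAt_F (r : ℝ) {x : ℝ} (hx : 0 < x) :
    HasDerivAt (fun y => F y r) (Real.log x - r * Real.log r / x) x := by
  have h1 := hasDerivAt_hfun hx.ne'
  have h2 : HasDerivAt (fun y => hfun r + r * Real.log r * (Real.log y - Real.log r))
      (r * Real.log r * (1 / x)) x := by
    have hl : HasDerivAt (fun y : ℝ => Real.log y - Real.log r) (1 / x) x := by
      simpa [one_div] using (Real.hasDerivAt_log hx.ne').sub_const (Real.log r)
    exact HasDerivAt.const_add _ (HasDerivAt.const_mul _ hl)
  have := h1.sub h2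
  have h3 : HasDerivAt (fun y => F y r) (Real.log x - r * Real.log r * (1 / x)) x := this
  rwa [mul_one_div] at h3

lemma F_continuousOn (r a b : ℝ) (ha : 0 < a) :
    ContinuousOn (fun y => F y r) (Set.Icc a b) := by
  have hlog : ContinuousOn Real.log (Set.Icc a b) :=
    Real.continuousOn_log.mono (fun y hy => ne_of_gt (lt_of_lt_of_le ha hy.1))
  simp only [F, hfun]
  exact (((continuousOn_id.mul hlog).sub continuousOn_id).add continuousOn_const).sub
    (continuousOn_const.add (continuousOn_const.mul (hlog.sub continuousOn_const)))

/-- Lemma A: if `-(r log r) ≤ x` then `F x r ≥ 0`. -/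
lemma lemA {r x : ℝ} (hre : (Real.exp 1)⁻¹ ≤ r) (hr1 : r ≤ 1)
    (hx0 : 0 < x) (hcx : -(r * Real.log r) ≤ x) (hx1 : x ≤ 1) : 0 ≤ F x r := by
  have hr0 : (0:ℝ) < r := lt_of_lt_of_le (by positivity) hre
  have hFr : F r r = 0 := by simp [F]
  rcases le_total x r with hxr | hrx
  · -- F antitone on [x, r]
    have hanti : AntitoneOn (fun y => F y r) (Icc x r) := by
      apply antitoneOn_of_deriv_nonpos (convex_Icc _ _) (F_continuousOn r x r hx0)
      · intro t ht
        rw [interior_Icc] at ht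
        exact ((hasDerivAt_F r (lt_trans hx0 ht.1)).differentiableAt).differentiableWithinAt
      · intro t ht
        rw [interior_Icc] at ht
        have ht0 : 0 < t := lt_trans hx0 ht.1
        rw [(hasDerivAt_F r ht0).deriv]
        have hphi : t * Real.log t ≤ r * Real.log r :=
          phi_le hre hr1 (le_trans hcx ht.1.le) ht.2.le
        rw [sub_nonpos, div_eq_mul_inv]
        calc Real.log t = (t * Real.log t) * t⁻¹ := by field_simp
        _ ≤ (r * Real.log r) * t⁻¹ := by
            apply mul_le_mul_of_nonneg_right hphi (by positivity)
    have := hanti ⟨le_refl x, hxr⟩ ⟨hxr, le_refl r⟩ hxr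
    simp only at this
    rw [hFr] at this
    linarith [this]
  · -- F monotone on [r, x]
    have hmono : MonotoneOn (fun y => F y r) (Icc r x) := by
      apply monotoneOn_of_deriv_nonneg (convex_Icc _ _) (F_continuousOn r r x hr0)
      · intro t ht
        rw [interior_Icc] at ht
        exact ((hasDerivAt_F r (lt_trans hr0 ht.1)).differentiableAt).differentiableWithinAt
      · intro t ht
        rw [interior_Icc] at ht
        have ht0 : 0 < t := lt_trans hr0 ht.1
        rw [(hasDerivAt_F r ht0).deriv]
        have hphi : r * Real.log r ≤ t * Real.log t :=
          phi_monotoneOn ⟨hre, hr1⟩ ⟨le_trans hre ht.1.le, le_trans ht.2.le hx1⟩ ht.1.le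
        rw [sub_nonneg, div_eq_mul_inv]
        calc (r * Real.log r) * t⁻¹ ≤ (t * Real.log t) * t⁻¹ :=
              mul_le_mul_of_nonneg_right hphi (by positivity)
        _ = Real.log t := by field_simp
    have := hmono ⟨le_refl r, hrx⟩ ⟨hrx, le_refl x⟩ hrx
    simp only at this
    rw [hFr] at this
    linarith [this]

/-- Lemma B: for fixed `x ≤ r₀`, the RHS is antitone in `r` on `[r₀, 1]`. -/
lemma lemB {x r₀ : ℝ} (hx : 0 < x) (hxr : x ≤ r₀) (hre : (Real.exp 1)⁻¹ ≤ r₀) :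
    AntitoneOn (fun r => hfun r + r * Real.log r * (Real.log x - Real.log r)) (Icc r₀ 1) := by
  have hr₀0 : (0:ℝ) < r₀ := lt_of_lt_of_le (by positivity) hre
  have hd : ∀ r : ℝ, 0 < r → HasDerivAt
      (fun r => hfun r + r * Real.log r * (Real.log x - Real.log r))
      ((1 + Real.log r) * (Real.log x - Real.log r)) r := by
    intro r hr
    have h1 := hasDerivAt_hfun hr.ne'
    have hsub : HasDerivAt (fun r : ℝ => Real.log x - Real.log r) (-(1/r)) r := by
      simpa [one_div] using HasDerivAt.const_sub (Real.log x) (Real.hasDerivAt_log hr.ne')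
    have h2 := (Real.hasDerivAt_mul_log hr.ne').mul hsub
    have := h1.add h2
    have h3 : HasDerivAt (fun r => hfun r + r * Real.log r * (Real.log x - Real.log r))
        (Real.log r + ((Real.log r + 1) * (Real.log x - Real.log r) + r * Real.log r * -(1 / r))) r :=
      this
    convert h3 using 1
    rw [show r * Real.log r * -(1 / r) = -Real.log r by field_simp]
    ring
  apply antitoneOn_of_deriv_nonpos (convex_Icc _ _)
  · have hlog : ContinuousOn Real.log (Set.Icc r₀ 1) := Real.continuousOn_log.mono
      (fun r hr => ne_of_gt (lt_of_lt_of_le hr₀0 hr.1))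
    simp only [hfun]
    exact ((((continuousOn_id.mul hlog).sub continuousOn_id).add continuousOn_const)).add
      ((continuousOn_id.mul hlog).mul (continuousOn_const.sub hlog))
  · intro r hr
    rw [interior_Icc] at hr
    exact ((hd r (lt_trans hr₀0 hr.1)).differentiableAt).differentiableWithinAt
  · intro r hr
    rw [interior_Icc] at hr
    have hr0 : 0 < r := lt_trans hr₀0 hr.1
    rw [(hd r hr0).deriv]
    have h1 : 0 ≤ 1 + Real.log r := by
      have := Real.log_le_log (by positivity : (0:ℝ) < (Real.exp 1)⁻¹) (le_trans hre hr.1.le)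
      rw [Real.log_inv, Real.log_exp] at this
      linarith
    have h2 : Real.log x - Real.log r ≤ 0 := by
      have := Real.log_le_log hx (hxr.trans hr.1.le)
      linarith
    exact mul_nonpos_of_nonneg_of_nonpos h1 h2

end Stmt15Aux

theorem stmt_15 (x₀ r₀ : ℝ) (hx₀ : 0 < x₀) (hxr : x₀ ≤ r₀) (hr₀1 : r₀ ≤ 1)
    (hr₀e : (Real.exp 1)⁻¹ ≤ r₀)
    (h0 : hfun x₀ ≥ hfun r₀ + r₀ * Real.log r₀ * (Real.log x₀ - Real.log r₀)) :
    ∀ x ∈ Set.Icc x₀ 1, ∀ r ∈ Set.Icc r₀ 1,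
      hfun x ≥ hfun r + r * Real.log r * (Real.log x - Real.log r) := by
  intro x hx r hr
  have hr₀0 : (0:ℝ) < r₀ := lt_of_lt_of_le (by positivity) hr₀e
  have hr0 : (0:ℝ) < r := lt_of_lt_of_le hr₀0 hr.1
  have hre : (Real.exp 1)⁻¹ ≤ r := hr₀e.trans hr.1
  have hx0 : 0 < x := lt_of_lt_of_le hx₀ hx.1
  suffices h : 0 ≤ Stmt15Aux.F x r by
    simp only [Stmt15Aux.F, sub_nonneg] at h
    exact h
  rcases le_or_gt (-(r * Real.log r)) x with hcx | hcx
  · exact Stmt15Aux.lemA hre hr.2 hx0 hcx hx.2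
  · -- x is below the inflection point; first decrease r to r₀
    have hce : -(r * Real.log r) ≤ (Real.exp 1)⁻¹ := by
      have := Stmt15Aux.neg_exp_le_mul_log hr0
      linarith
    have hxr₀ : x ≤ r₀ := le_trans (le_of_lt (lt_of_lt_of_le hcx hce)) hr₀e
    have hB := Stmt15Aux.lemB hx0 hxr₀ hr₀e ⟨le_refl r₀, hr₀1⟩ hr hr.1
    simp only at hB
    suffices h0' : 0 ≤ Stmt15Aux.F x r₀ by
      simp only [Stmt15Aux.F, sub_nonneg] at h0' ⊢
      linarith
    set c₀ := -(r₀ * Real.log r₀) with hc₀def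
    rcases le_or_gt c₀ x with hc | hc
    · exact Stmt15Aux.lemA hr₀e hr₀1 hx0 hc hx.2
    · -- x₀ ≤ x < c₀ : use concavity of y ↦ F y r₀ on [x₀, c₀]
      have hc₀pos : 0 < c₀ := lt_trans hx0 hc
      have hc₀e : c₀ ≤ (Real.exp 1)⁻¹ := by
        have := Stmt15Aux.neg_exp_le_mul_log hr₀0
        simp only [hc₀def]
        linarith
      have hx₀c : x₀ ≤ c₀ := le_trans hx.1 hc.le
      have hconc : ConcaveOn ℝ (Set.Icc x₀ c₀) (fun y => Stmt15Aux.F y r₀) := by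
        apply concaveOn_of_hasDerivWithinAt2_nonpos (f' := fun y =>
            Real.log y - r₀ * Real.log r₀ / y)
          (f'' := fun y => 1 / y + r₀ * Real.log r₀ / y ^ 2)
          (convex_Icc _ _) (Stmt15Aux.F_continuousOn r₀ x₀ c₀ hx₀)
        · intro y hy
          rw [interior_Icc] at hy
          exact (Stmt15Aux.hasDerivAt_F r₀ (lt_trans hx₀ hy.1)).hasDerivWithinAt
        · intro y hy
          rw [interior_Icc] at hy
          have hy0 : 0 < y := lt_trans hx₀ hy.1
          have h1 : HasDerivAt (fun y : ℝ => r₀ * Real.log r₀ / y)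
              (r₀ * Real.log r₀ * (-(y ^ 2)⁻¹)) y := by
            simpa [div_eq_mul_inv] using (hasDerivAt_inv hy0.ne').const_mul (r₀ * Real.log r₀)
          have h2 := (Real.hasDerivAt_log hy0.ne').sub h1
          have heq : 1 / y - r₀ * Real.log r₀ * (-(y ^ 2)⁻¹)
              = 1 / y + r₀ * Real.log r₀ / y ^ 2 := by ring
          rw [← heq]
          have h3 : HasDerivAt (fun y : ℝ => Real.log y - r₀ * Real.log r₀ / y)
              (y⁻¹ - r₀ * Real.log r₀ * (-(y ^ 2)⁻¹)) y := h2
          simpa [one_div] using h3.hasDerivWithinAt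
        · intro y hy
          rw [interior_Icc] at hy
          have hy0 : 0 < y := lt_trans hx₀ hy.1
          have heq : 1 / y + r₀ * Real.log r₀ / y ^ 2 = (y + r₀ * Real.log r₀) / y ^ 2 := by
            field_simp
          rw [heq]
          apply div_nonpos_of_nonpos_of_nonneg _ (by positivity)
          have : y < c₀ := hy.2
          simp only [hc₀def] at this
          linarith
      have hseg : x ∈ segment ℝ x₀ c₀ := by
        rw [segment_eq_Icc hx₀c]
        exact ⟨hx.1, hc.le⟩
      have hmin := hconc.ge_on_segment (Set.left_mem_Icc.mpr hx₀c)
        (Set.right_mem_Icc.mpr hx₀c) hseg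
      have hFx₀ : 0 ≤ Stmt15Aux.F x₀ r₀ := by
        simp only [Stmt15Aux.F, sub_nonneg]
        exact h0
      have hFc₀ : 0 ≤ Stmt15Aux.F c₀ r₀ :=
        Stmt15Aux.lemA hr₀e hr₀1 hc₀pos (le_refl _) (le_trans hc₀e (by
          have := Real.exp_pos 1
          rw [inv_le_one_iff₀]
          right
          linarith [Real.add_one_le_exp 1]))
      calc (0:ℝ) ≤ min (Stmt15Aux.F x₀ r₀) (Stmt15Aux.F c₀ r₀) := le_min hFx₀ hFc₀
      _ ≤ Stmt15Aux.F x r₀ := hmin
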